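/- Let R be a ring, M, N₁, N₂ left R-modules with M a pure submodule of both N₁ and N₂, and suppose the pure-injective hulls satisfy PE(N₁) = PE(M) ⊕ N₁′ and PE(N₂) = PE(M) ⊕ N₂′. Define L = PE(N₁) ⊕ PE(N₂) and maps f : N₁ → L by f(m + n₁) = (m, n₁, m, 0) and g : N₂ → L by g(m + n₂) = (m, 0, m, n₂) (for m ∈ PE(M), nᵢ ∈ Nᵢ′). Then f and g are pure embeddings that agree on M; in particular the class of modules closed under direct sums and pure-injective envelopes has the amalgamation property with respect to pure embeddings. -/
import Mathlib


universe u v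

/-- A submodule `A ≤ M` is pure if every finite system of `R`-linear equations with
parameters in `A` that is solvable in `M` is solvable in `A`. -/
def IsPureSubmodule (R : Type u) [Ring R] {M : Type v} [AddCommGroup M] [Module R M]
    (A : Submodule R M) : Prop :=
  ∀ (k n : ℕ) (c : Fin k → Fin n → R) (a : Fin k → M),
    (∀ i, a i ∈ A) →
    (∃ x : Fin n → M, ∀ i, (∑ j, c i j • x j) = a i) →
    ∃ x : Fin n → M, (∀ j, x j ∈ A) ∧ ∀ i, (∑ j, c i j • x j) = a i

/-- A linear map is a pure embedding if it is injective and its range is a pure submodule. -/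
def IsPureEmbedding (R : Type u) [Ring R] {M N : Type v} [AddCommGroup M] [Module R M]
    [AddCommGroup N] [Module R N] (f : M →ₗ[R] N) : Prop :=
  Function.Injective f ∧ IsPureSubmodule R (LinearMap.range f)

/-- A module is pure-injective if it is a direct summand of every module containing it
as a pure submodule, i.e. every pure embedding out of it admits a retraction. -/
def IsPureInjective (R : Type u) [Ring R] (M : Type v) [AddCommGroup M] [Module R M] : Prop :=
  ∀ (N : Type v) [AddCommGroup N] [Module R N] (f : M →ₗ[R] N),
    IsPureEmbedding R f → ∃ g : N →ₗ[R] M, g ∘ₗ f = LinearMap.id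

/-- A module is absolutely pure if it is pure in every module containing it. -/
def IsAbsolutelyPure (R : Type u) [Ring R] (M : Type v) [AddCommGroup M] [Module R M] : Prop :=
  ∀ (N : Type v) [AddCommGroup N] [Module R N] (f : M →ₗ[R] N),
    Function.Injective f → IsPureSubmodule R (LinearMap.range f)


/-- If a pure submodule `S ≤ A` maps into `B` via `φ` admitting a retraction `π`
onto the inclusion, then the range of `φ` is pure in `B`. -/
lemma range_pure_of_retract (R : Type u) [Ring R] {A B : Type v}
    [AddCommGroup A] [Module R A] [AddCommGroup B] [Module R B]
    (S : Submodule R A) (hS : IsPureSubmodule R S) (φ : S →ₗ[R] B) (π : B →ₗ[R] A)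
    (hπ : ∀ x : S, π (φ x) = (x : A)) : IsPureSubmodule R (LinearMap.range φ) := by
  intro k n c a ha hsol
  choose s hs using ha
  obtain ⟨x, hx⟩ := hsol
  have hsolA : ∃ y : Fin n → A, ∀ i, (∑ j, c i j • y j) = (s i : A) := by
    refine ⟨fun j => π (x j), fun i => ?_⟩
    have h1 := congrArg π (hx i)
    rw [map_sum] at h1
    simp only [map_smul] at h1
    rw [h1, ← hs i, hπ]
  obtain ⟨y, hy, hy2⟩ := hS k n c (fun i => (s i : A)) (fun i => (s i).2) hsolA
  refine ⟨fun j => φ ⟨y j, hy j⟩, fun j => ⟨_, rfl⟩, fun i => ?_⟩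
  have key : (∑ j, c i j • (⟨y j, hy j⟩ : S)) = s i := by
    apply Subtype.ext
    push_cast
    exact hy2 i
  calc (∑ j, c i j • φ ⟨y j, hy j⟩)
      = φ (∑ j, c i j • (⟨y j, hy j⟩ : S)) := by rw [map_sum]; simp only [map_smul]
    _ = φ (s i) := by rw [key]
    _ = a i := hs i

/-- the amalgamation construction via pure-injective envelopes.
Here PM plays the role of PE(M), with PE(N₁) = PM ⊕ N₁' and PE(N₂) = PM ⊕ N₂',
N₁ and N₂ realized as pure submodules S₁ ≤ PM × N₁', S₂ ≤ PM × N₂' containing M.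
The maps f(m + n₁) = (m, n₁, m, 0) and g(m + n₂) = (m, 0, m, n₂) into
L = PE(N₁) ⊕ PE(N₂) are pure embeddings agreeing on M. -/
theorem stmt12 (R : Type u) [Ring R]
    (PM N₁' N₂' : Type u) [AddCommGroup PM] [Module R PM]
    [AddCommGroup N₁'] [Module R N₁'] [AddCommGroup N₂'] [Module R N₂']
    (M : Submodule R PM)
    (S₁ : Submodule R (PM × N₁')) (S₂ : Submodule R (PM × N₂'))
    (hS₁ : IsPureSubmodule R S₁) (hS₂ : IsPureSubmodule R S₂)
    (hM₁ : ∀ m : M, ((m : PM), (0 : N₁')) ∈ S₁)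
    (hM₂ : ∀ m : M, ((m : PM), (0 : N₂')) ∈ S₂) :
    ∃ (f : S₁ →ₗ[R] (PM × N₁') × (PM × N₂')) (g : S₂ →ₗ[R] (PM × N₁') × (PM × N₂')),
      (∀ x : S₁, f x = ((x : PM × N₁'), ((x : PM × N₁').1, (0 : N₂')))) ∧
      (∀ y : S₂, g y = ((((y : PM × N₂').1, (0 : N₁')) : PM × N₁'), (y : PM × N₂'))) ∧
      IsPureEmbedding R f ∧ IsPureEmbedding R g ∧
      ∀ m : M, f ⟨((m : PM), 0), hM₁ m⟩ = g ⟨((m : PM), 0), hM₂ m⟩ := by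
  set f : S₁ →ₗ[R] (PM × N₁') × (PM × N₂') :=
    LinearMap.prod S₁.subtype
      ((LinearMap.inl R PM N₂').comp ((LinearMap.fst R PM N₁').comp S₁.subtype)) with hf
  set g : S₂ →ₗ[R] (PM × N₁') × (PM × N₂') :=
    LinearMap.prod
      ((LinearMap.inl R PM N₁').comp ((LinearMap.fst R PM N₂').comp S₂.subtype))
      S₂.subtype with hg
  have hfx : ∀ x : S₁, f x = ((x : PM × N₁'), ((x : PM × N₁').1, (0 : N₂'))) := by
    intro x; rfl
  have hgy : ∀ y : S₂, g y = ((((y : PM × N₂').1, (0 : N₁')) : PM × N₁'), (y : PM × N₂')) := by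
    intro y; rfl
  refine ⟨f, g, hfx, hgy, ⟨?_, ?_⟩, ⟨?_, ?_⟩, ?_⟩
  · intro x y h
    have : (x : PM × N₁') = (y : PM × N₁') := congrArg Prod.fst h
    exact Subtype.ext this
  · exact range_pure_of_retract R S₁ hS₁ f
      (LinearMap.fst R (PM × N₁') (PM × N₂')) (fun x => rfl)
  · intro x y h
    have : (x : PM × N₂') = (y : PM × N₂') := congrArg Prod.snd h
    exact Subtype.ext this
  · exact range_pure_of_retract R S₂ hS₂ g
      (LinearMap.snd R (PM × N₁') (PM × N₂')) (fun x => rfl)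
  · intro m
    rfl
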